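/- Let λ = (c, C), where c is an axis-parallel square of diameter |c| with center o = p(c) and C is a cone with apex o whose opening angle is at most arcsin(1/100). Define x ∈ P_large(λ) iff x ∈ C, r_x ≥ 2^10·|c| and | r_x − |xo| | < 5|c|; define y ∈ P_small(λ) iff y ∈ c and r_y ≤ 2|c|. Let v, v', w ∈ P_large(λ) and u, u' ∈ P_small(λ) with r_v > r_{v'}. Suppose the shortest s–u path in the weighted disk graph G contains the edge vu (so d(u) = d(v) + |vu|), the pair v'u' is an edge of G, and w is the predecessor of u' on the shortest s–u' path (so d(u') = d(w) + |wu'|). Then d(w) < d(v) + r_v − 6|c|. -/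

import Mathlib

noncomputable section

/-- Points of the plane. -/
abbrev Pt := EuclideanSpace ℝ (Fin 2)

/-- Membership in the closed axis-parallel square of Euclidean diameter `d`
(side `d/√2`) centered at `p`. -/
def inSq (p : Pt) (d : ℝ) (x : Pt) : Prop :=
  ∀ i, |x i - p i| ≤ d / (2 * Real.sqrt 2)

/-- Adjacency in the weighted disk graph: distinct points whose disks intersect. -/
def Adj (r : Pt → ℝ) (x y : Pt) : Prop := x ≠ y ∧ dist x y ≤ r x + r y

/-- A (simple) path from `s` to `v` in the weighted disk graph on `P`. -/
def IsPath (P : Set Pt) (r : Pt → ℝ) (s v : Pt) (L : List Pt) : Prop :=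
  L.head? = some s ∧ L.getLast? = some v ∧ (∀ x ∈ L, x ∈ P) ∧ L.Nodup ∧ L.Chain' (Adj r)

/-- The length of a path: the sum of the Euclidean lengths of its edges. -/
def pathLen : List Pt → ℝ
  | [] => 0
  | [_] => 0
  | a :: b :: L => dist a b + pathLen (b :: L)

/-- Shortest-path distance from `s` to `v` in the weighted disk graph on `P`. -/
def spDist (P : Set Pt) (r : Pt → ℝ) (s v : Pt) : ℝ :=
  sInf (pathLen '' {L | IsPath P r s v L})

lemma pathLen_nonneg : ∀ L : List Pt, 0 ≤ pathLen L
  | [] => le_of_eq rfl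
  | [_] => le_of_eq rfl
  | a :: b :: L => by
      have h := pathLen_nonneg (b :: L)
      have h2 := dist_nonneg (x := a) (y := b)
      simp only [pathLen]; linarith

lemma pathLen_prefix : ∀ (L M : List Pt), pathLen L ≤ pathLen (L ++ M)
  | [], M => by simpa [pathLen] using pathLen_nonneg M
  | [a], M => by simpa [pathLen] using pathLen_nonneg (a :: M)
  | a :: b :: L, M => by
      have h := pathLen_prefix (b :: L) M
      simp only [List.cons_append, pathLen, List.append_eq] at h ⊢
      linarith

lemma pathLen_concat : ∀ (L : List Pt) (x y : Pt), L.getLast? = some x →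
    pathLen (L ++ [y]) = pathLen L + dist x y
  | [], x, y, h => by simp at h
  | [a], x, y, h => by
      simp only [List.getLast?_singleton, Option.some.injEq] at h
      subst h
      simp [pathLen]
  | a :: b :: L, x, y, h => by
      have h' : (b :: L).getLast? = some x := by
        rwa [List.getLast?_cons_cons] at h
      have ih := pathLen_concat (b :: L) x y h'
      simp only [List.cons_append, pathLen, List.append_eq] at ih ⊢
      rw [ih]; ring

lemma isPath_extend {P : Set Pt} {r : Pt → ℝ} {s x y : Pt} {L : List Pt}
    (hL : IsPath P r s x L) (hxy : Adj r x y) (hyP : y ∈ P) :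
    ∃ L', IsPath P r s y L' ∧ pathLen L' ≤ pathLen L + dist x y := by
  obtain ⟨h1, h2, h3, h4, h5⟩ := hL
  by_cases hy : y ∈ L
  · obtain ⟨L₁, L₂, rfl⟩ := List.append_of_mem hy
    have heq : L₁ ++ y :: L₂ = (L₁ ++ [y]) ++ L₂ := by simp
    have hpre : (L₁ ++ [y]) <+: (L₁ ++ y :: L₂) := ⟨L₂, heq.symm⟩
    refine ⟨L₁ ++ [y], ⟨?_, List.getLast?_concat, ?_, ?_, ?_⟩, ?_⟩
    · cases L₁ with
      | nil => simpa using h1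
      | cons a t => simpa using h1
    · intro z hz; exact h3 z (hpre.sublist.subset hz)
    · exact h4.sublist hpre.sublist
    · exact h5.prefix hpre
    · calc pathLen (L₁ ++ [y]) ≤ pathLen ((L₁ ++ [y]) ++ L₂) := pathLen_prefix _ _
        _ = pathLen (L₁ ++ y :: L₂) := by rw [← heq]
        _ ≤ _ := le_add_of_nonneg_right dist_nonneg
  · refine ⟨L ++ [y], ⟨?_, List.getLast?_concat, ?_, ?_, ?_⟩,
      le_of_eq (pathLen_concat L x y h2)⟩
    · cases L with
      | nil => simp at h1
      | cons a t => simpa using h1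
    · intro z hz
      rcases List.mem_append.mp hz with hz | hz
      · exact h3 z hz
      · simp at hz; subst hz; exact hyP
    · rw [List.nodup_append]
      exact ⟨h4, List.nodup_singleton y, by intro a ha b hb; simp at hb; subst hb; exact fun h => hy (h ▸ ha)⟩
    · refine List.isChain_append.mpr ⟨h5, List.isChain_singleton y, ?_⟩
      intro a ha b hb
      rw [h2] at ha
      simp at ha hb
      subst ha; subst hb; exact hxy

lemma spDist_step {P : Set Pt} {r : Pt → ℝ} {s x y : Pt} (hyP : y ∈ P) (hxy : Adj r x y)
    (hx : ∃ L, IsPath P r s x L) :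
    (∃ L, IsPath P r s y L) ∧ spDist P r s y ≤ spDist P r s x + dist x y := by
  obtain ⟨L, hL⟩ := hx
  obtain ⟨L', hL', _⟩ := isPath_extend hL hxy hyP
  have hbdd : BddBelow (pathLen '' {M | IsPath P r s y M}) := by
    refine ⟨0, ?_⟩
    rintro t ⟨M, _, rfl⟩
    exact pathLen_nonneg M
  refine ⟨⟨L', hL'⟩, ?_⟩
  have hne : (pathLen '' {M | IsPath P r s x M}).Nonempty := ⟨pathLen L, L, hL, rfl⟩
  have key : ∀ t ∈ pathLen '' {M | IsPath P r s x M}, spDist P r s y - dist x y ≤ t := by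
    rintro t ⟨M, hM, rfl⟩
    obtain ⟨M', hM', hlen⟩ := isPath_extend hM hxy hyP
    have h := csInf_le hbdd ⟨M', hM', rfl⟩
    simp only [spDist]
    linarith
  have h := le_csInf hne key
  simp only [spDist] at h ⊢
  linarith

lemma small_dist {o x : Pt} {ℓ : ℝ} (hℓ : 0 < ℓ) (h : inSq o ℓ x) : dist x o ≤ ℓ / 2 := by
  have h0 : ∀ i, dist (x i) (o i) ≤ ℓ / (2 * Real.sqrt 2) := fun i => by
    rw [Real.dist_eq]; exact h i
  have hs2 : Real.sqrt 2 ^ 2 = 2 := Real.sq_sqrt (by norm_num)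
  have hs2' : (0:ℝ) < Real.sqrt 2 := by positivity
  have hsum : ∑ i, dist (x i) (o i) ^ 2 ≤ (ℓ/2)^2 := by
    rw [Fin.sum_univ_two]
    have e1 : dist (x 0) (o 0)^2 ≤ (ℓ/(2*Real.sqrt 2))^2 :=
      pow_le_pow_left₀ dist_nonneg (h0 0) 2
    have e2 : dist (x 1) (o 1)^2 ≤ (ℓ/(2*Real.sqrt 2))^2 :=
      pow_le_pow_left₀ dist_nonneg (h0 1) 2
    have e3 : (ℓ/(2*Real.sqrt 2))^2 = ℓ^2/8 := by
      rw [div_pow, mul_pow, hs2]; norm_num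
    rw [e3] at e1 e2
    nlinarith [sq_nonneg ℓ]
  calc dist x o = Real.sqrt (∑ i, dist (x i) (o i) ^ 2) := EuclideanSpace.dist_eq x o
    _ ≤ Real.sqrt ((ℓ/2)^2) := Real.sqrt_le_sqrt hsum
    _ = ℓ/2 := Real.sqrt_sq (by linarith)

lemma cone_dist_sq {o x y : Pt}
    (hθ : EuclideanGeometry.angle x o y ≤ Real.arcsin (1/100)) :
    dist x y ^ 2 ≤ (dist x o - dist y o)^2 + (1/5000) * (dist x o * dist y o) := by
  have hlaw := EuclideanGeometry.law_cos x o y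
  have hcos : (9999/10000 : ℝ) ≤ Real.cos (EuclideanGeometry.angle x o y) := by
    have h1 : Real.cos (Real.arcsin (1/100)) ≤ Real.cos (EuclideanGeometry.angle x o y) :=
      Real.cos_le_cos_of_nonneg_of_le_pi (EuclideanGeometry.angle_nonneg _ _ _)
        (le_trans (Real.arcsin_le_pi_div_two _) (by linarith [Real.pi_pos])) hθ
    have h2 : Real.cos (Real.arcsin (1/100)) = Real.sqrt (1 - (1/100:ℝ)^2) :=
      Real.cos_arcsin _
    have h4 := Real.sq_sqrt (show (0:ℝ) ≤ 1 - (1/100:ℝ)^2 by norm_num)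
    have h5 := Real.sqrt_nonneg (1 - (1/100:ℝ)^2)
    nlinarith
  have hcle := Real.cos_le_one (EuclideanGeometry.angle x o y)
  have hA : 0 ≤ dist x o := dist_nonneg
  have hB : 0 ≤ dist y o := dist_nonneg
  nlinarith [mul_nonneg hA hB]

lemma cone_adj {o x y : Pt} {ℓ rx ry : ℝ} (hℓ : 0 < ℓ)
    (hθ : EuclideanGeometry.angle x o y ≤ Real.arcsin (1/100))
    (hx1 : 2^10 * ℓ ≤ rx) (hx2 : |rx - dist x o| < 5*ℓ)
    (hy1 : 2^10 * ℓ ≤ ry) (hy2 : |ry - dist y o| < 5*ℓ) :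
    dist x y ≤ rx + ry := by
  obtain ⟨hx2a, hx2b⟩ := abs_lt.mp hx2
  obtain ⟨hy2a, hy2b⟩ := abs_lt.mp hy2
  set A := dist x o with hA
  set B := dist y o with hB
  have hA19 : 1019 * ℓ ≤ A := by norm_num at hx1; linarith
  have hB19 : 1019 * ℓ ≤ B := by norm_num at hy1; linarith
  have hsq := cone_dist_sq hθ
  have hRpos : 0 ≤ rx + ry := by nlinarith
  have key : dist x y ^ 2 ≤ (rx + ry)^2 := by
    nlinarith [mul_nonneg (show (0:ℝ) ≤ A - 1019*ℓ by linarith) (show (0:ℝ) ≤ B by linarith),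
      mul_nonneg (show (0:ℝ) ≤ B - 1019*ℓ by linarith) (show (0:ℝ) ≤ A by linarith),
      sq_nonneg (A - B), sq_nonneg (rx + ry - A - B + 10*ℓ), mul_pos hℓ hℓ]
  exact le_of_pow_le_pow_left₀ (by norm_num) hRpos key

set_option maxHeartbeats 1000000 in
/-- Let `λ = (c, C)`, where `c` is an axis-parallel square of diameter
`ℓ` centered at `o` and `C` is a cone with apex `o` of opening angle at most
`arcsin(1/100)` (so any two points of `C` subtend an angle at most `arcsin(1/100)` at
`o`). Membership `x ∈ P_large(λ)` means `x ∈ C`, `r x ≥ 2^10·ℓ` and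
`|r x − |xo|| < 5ℓ`; membership `y ∈ P_small(λ)` means `y ∈ c` and `r y ≤ 2ℓ`.
Let `v, v', w ∈ P_large(λ)` and `u, u' ∈ P_small(λ)` with `r v > r v'`. If the shortest
`s`–`u` path contains the edge `vu`, the pair `v'u'` is an edge of `G`, and `w` is the
predecessor of `u'` on the shortest `s`–`u'` path, then `d(w) < d(v) + r v − 6ℓ`. -/
theorem alarm_down
    (P : Set Pt) (r : Pt → ℝ) (hr : ∀ p ∈ P, 1 ≤ r p)
    (s : Pt) (hs : s ∈ P)
    (o : Pt) (ℓ : ℝ) (hℓ : 0 < ℓ)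
    (C : Set Pt)
    (hC : ∀ x ∈ C, ∀ y ∈ C, EuclideanGeometry.angle x o y ≤ Real.arcsin (1 / 100))
    (v v' w u u' : Pt)
    (hvP : v ∈ P) (hv'P : v' ∈ P) (hwP : w ∈ P) (huP : u ∈ P) (hu'P : u' ∈ P)
    -- `v, v', w ∈ P_large(λ)`
    (hvC : v ∈ C) (hvr : 2 ^ 10 * ℓ ≤ r v) (hvo : |r v - dist v o| < 5 * ℓ)
    (hv'C : v' ∈ C) (hv'r : 2 ^ 10 * ℓ ≤ r v') (hv'o : |r v' - dist v' o| < 5 * ℓ)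
    (hwC : w ∈ C) (hwr : 2 ^ 10 * ℓ ≤ r w) (hwo : |r w - dist w o| < 5 * ℓ)
    -- `u, u' ∈ P_small(λ)`
    (huc : inSq o ℓ u) (hur : r u ≤ 2 * ℓ)
    (hu'c : inSq o ℓ u') (hu'r : r u' ≤ 2 * ℓ)
    (hord : r v' < r v)
    -- connectivity to the source
    (hconnv : ∃ L, IsPath P r s v L) (hconnw : ∃ L, IsPath P r s w L)
    (hconnu : ∃ L, IsPath P r s u L) (hconnu' : ∃ L, IsPath P r s u' L)
    -- the shortest `s`–`u` path contains the edge `vu`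
    (hvu : Adj r v u) (hdu : spDist P r s u = spDist P r s v + dist v u)
    -- `v'u'` is an edge of `G`
    (hv'u' : Adj r v' u')
    -- `w` is the predecessor of `u'` on the shortest `s`–`u'` path
    (hwu' : Adj r w u') (hdu' : spDist P r s u' = spDist P r s w + dist w u') :
    spDist P r s w < spDist P r s v + r v - 6 * ℓ := by
  have h100 : (1/100 : ℝ) = 1/100 := rfl
  obtain ⟨hva, hvb⟩ := abs_lt.mp hvo
  obtain ⟨hv'a, hv'b⟩ := abs_lt.mp hv'o
  obtain ⟨hwa, hwb⟩ := abs_lt.mp hwo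
  set A := dist v o with hA
  set B := dist v' o with hB
  set W := dist w o with hW
  have hA19 : 1019 * ℓ ≤ A := by norm_num at hvr; linarith
  have hB19 : 1019 * ℓ ≤ B := by norm_num at hv'r; linarith
  have hW19 : 1019 * ℓ ≤ W := by norm_num at hwr; linarith
  by_cases hvw : v = w
  · subst hvw
    norm_num at hvr
    linarith
  by_cases hcase : 2 * W ≤ A
  · -- Case I: direct edge v-w
    have hadj : Adj r v w := ⟨hvw, cone_adj hℓ (hC v hvC w hwC) hvr hvo hwr hwo⟩
    have hstep := (spDist_step hwP hadj hconnv).2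
    have hsq := cone_dist_sq (hC v hvC w hwC)
    have hpos : (0:ℝ) ≤ r v - 6 * ℓ := by norm_num at hvr; linarith
    have key : dist v w ^ 2 < (r v - 6*ℓ)^2 := by
      nlinarith [mul_nonneg (show (0:ℝ) ≤ A - 2*W by linarith) (show (0:ℝ) ≤ W by linarith),
        mul_nonneg (show (0:ℝ) ≤ W - 1019*ℓ by linarith) (show (0:ℝ) ≤ A by linarith),
        mul_pos hℓ hℓ, sq_nonneg (A - W)]
    have hlt : dist v w < r v - 6*ℓ := by
      nlinarith [dist_nonneg (x := v) (y := w)]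
    linarith
  · -- Case II: via v' and u'
    push_neg at hcase
    have hne : v ≠ v' := fun h => by rw [h] at hord; exact lt_irrefl _ hord
    have hadj : Adj r v v' := ⟨hne, cone_adj hℓ (hC v hvC v' hv'C) hvr hvo hv'r hv'o⟩
    have s1 := spDist_step hv'P hadj hconnv
    have s2 := (spDist_step hu'P hv'u' s1.1).2
    -- bound dist v v'
    have hsq := cone_dist_sq (hC v hvC v' hv'C)
    have hWpos : (0:ℝ) ≤ W := dist_nonneg
    have hApos : (0:ℝ) ≤ A := dist_nonneg
    have hBpos : (0:ℝ) ≤ B := dist_nonneg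
    have hDpos : (0:ℝ) ≤ (r v - r v') + 10*ℓ := by linarith
    have hKpos : (0:ℝ) ≤ (r v - r v') + 10*ℓ + (3/100)*W := by linarith
    have e1 : (A - B)^2 ≤ ((r v - r v') + 10*ℓ)^2 := by
      nlinarith [mul_nonneg (show (0:ℝ) ≤ (r v - r v') + 10*ℓ - (A - B) by linarith)
        (show (0:ℝ) ≤ (r v - r v') + 10*ℓ + (A - B) by linarith)]
    have e2 : A * B ≤ 2*W*(2*W + 10*ℓ) :=
      mul_le_mul (by linarith) (by linarith) hBpos (by linarith)
    have e3 : (1/5000) * (2*W*(2*W + 10*ℓ)) ≤ (3/100*W)^2 := by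
      nlinarith [mul_nonneg (show (0:ℝ) ≤ W - 1019*ℓ by linarith) hWpos]
    have hkey : dist v v' ^ 2 ≤ ((r v - r v') + 10*ℓ + (3/100)*W)^2 := by
      nlinarith [mul_nonneg hDpos hWpos]
    have hvv' : dist v v' ≤ (r v - r v') + 10*ℓ + (3/100)*W :=
      le_of_pow_le_pow_left₀ (by norm_num) hKpos hkey
    have hv'u'd : dist v' u' ≤ r v' + 2*ℓ := le_trans hv'u'.2 (by linarith)
    have hwu'd : W - ℓ/2 ≤ dist w u' := by
      have ht := dist_triangle w u' o
      have hs := small_dist hℓ hu'c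
      linarith
    linarith [s1.2, s2]
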